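/- Suppose the N-player Riccati system has a solution (P_1, …, P_N) on a subinterval [τ, T] ⊆ [0, T] (each P_i : [τ,T] → ℝ^{Nn×Nn} differentiable and satisfying the system). Then such a solution is unique, and for every i ∈ {1,…,N} and every t ∈ [τ, T], the matrix P_i(t) is symmetric. -/

import Mathlib

open Matrix

/-- `Â = I_N ⊗ A + (1/N)(𝟙_{N×N} ⊗ G)`, written entrywise. -/
noncomputable def hatA (n N : ℕ) (A G : Matrix (Fin n) (Fin n) ℝ) :
    Matrix (Fin N × Fin n) (Fin N × Fin n) ℝ :=
  Matrix.of fun p q => (if p.1 = q.1 then A p.2 q.2 else 0) + (1 / (N : ℝ)) * G p.2 q.2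

/-- `B_k = e_k ⊗ B`. -/
noncomputable def Bblk (n n1 N : ℕ) (B : Matrix (Fin n) (Fin n1) ℝ) (k : Fin N) :
    Matrix (Fin N × Fin n) (Fin n1) ℝ :=
  Matrix.of fun p c => if p.1 = k then B p.2 c else 0

/-- `K_i = [0,…,0, I_n, 0,…,0] − (1/N)[Γ, …, Γ]` with `I_n` in the `i`-th block. -/
noncomputable def Kblk (n N : ℕ) (Γ : Matrix (Fin n) (Fin n) ℝ) (i : Fin N) :
    Matrix (Fin n) (Fin N × Fin n) ℝ :=
  Matrix.of fun r q => (if q.1 = i ∧ r = q.2 then (1 : ℝ) else 0) - (1 / (N : ℝ)) * Γ r q.2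

/-- `Q_i = K_iᵀ Q K_i` (and `Q_{if} = K_{if}ᵀ Q_f K_{if}` with `Γ_f, Q_f`). -/
noncomputable def Qblk (n N : ℕ) (Q Γ : Matrix (Fin n) (Fin n) ℝ) (i : Fin N) :
    Matrix (Fin N × Fin n) (Fin N × Fin n) ℝ :=
  (Kblk n N Γ i)ᵀ * Q * Kblk n N Γ i

/-- Right-hand side of the `N`-player Riccati system:
`−(P_i Â + Âᵀ P_i) + P_i Σ_k B_k R⁻¹ B_kᵀ P_k + Σ_k P_k B_k R⁻¹ B_kᵀ P_i
  − P_i B_i R⁻¹ B_iᵀ P_i − Q_i`. -/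
noncomputable def riccatiRHS (n n1 N : ℕ) (A G Q Γ : Matrix (Fin n) (Fin n) ℝ)
    (B : Matrix (Fin n) (Fin n1) ℝ) (R : Matrix (Fin n1) (Fin n1) ℝ)
    (P : Fin N → Matrix (Fin N × Fin n) (Fin N × Fin n) ℝ) (i : Fin N) :
    Matrix (Fin N × Fin n) (Fin N × Fin n) ℝ :=
  -(P i * hatA n N A G + (hatA n N A G)ᵀ * P i)
    + P i * (∑ k, Bblk n n1 N B k * R⁻¹ * (Bblk n n1 N B k)ᵀ * P k)
    + (∑ k, P k * Bblk n n1 N B k * R⁻¹ * (Bblk n n1 N B k)ᵀ) * P i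
    - P i * Bblk n n1 N B i * R⁻¹ * (Bblk n n1 N B i)ᵀ * P i
    - Qblk n N Q Γ i

/-- `(P_1, …, P_N)` solves the `N`-player Riccati terminal value problem on `[τ, T]`:
each `P_i` is differentiable on `[τ,T]` with derivative given by the Riccati right-hand
side (entrywise), and `P_i(T) = Q_{if}`. -/
def IsRiccatiSol (n n1 N : ℕ) (A G Q Qf Γ Γf : Matrix (Fin n) (Fin n) ℝ)
    (B : Matrix (Fin n) (Fin n1) ℝ) (R : Matrix (Fin n1) (Fin n1) ℝ) (τ T : ℝ)
    (P : Fin N → ℝ → Matrix (Fin N × Fin n) (Fin N × Fin n) ℝ) : Prop :=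
  (∀ i, ∀ t ∈ Set.Icc τ T, ∀ p q,
      HasDerivWithinAt (fun s => P i s p q)
        (riccatiRHS n n1 N A G Q Γ B R (fun k => P k t) i p q) (Set.Icc τ T) t)
  ∧ ∀ i, P i T = Qblk n N Qf Γf i

/-! ### Auxiliary lemmas -/

lemma rhs_transpose (n n1 N : ℕ) (A G Q Γ : Matrix (Fin n) (Fin n) ℝ)
    (B : Matrix (Fin n) (Fin n1) ℝ) (R : Matrix (Fin n1) (Fin n1) ℝ)
    (hQt : Qᵀ = Q) (hRt : Rᵀ = R)
    (P : Fin N → Matrix (Fin N × Fin n) (Fin N × Fin n) ℝ) (i : Fin N) :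
    riccatiRHS n n1 N A G Q Γ B R (fun k => (P k)ᵀ) i
      = (riccatiRHS n n1 N A G Q Γ B R P i)ᵀ := by
  have hRinv : (R⁻¹)ᵀ = R⁻¹ := by rw [Matrix.transpose_nonsing_inv, hRt]
  simp only [riccatiRHS, Qblk, Matrix.transpose_sub, Matrix.transpose_add,
    Matrix.transpose_neg, Matrix.transpose_mul, Matrix.transpose_sum,
    Matrix.transpose_transpose, hRinv, hQt, Finset.sum_mul, Finset.mul_sum,
    Matrix.mul_assoc]
  abel

/-- index type for flattening the family of matrices -/
abbrev RicIdx (n N : ℕ) := Fin N × (Fin N × Fin n) × (Fin N × Fin n)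

noncomputable def ricDec {n N : ℕ} (e : RicIdx n N → ℝ) :
    Fin N → Matrix (Fin N × Fin n) (Fin N × Fin n) ℝ :=
  fun k => Matrix.of fun p q => e (k, p, q)

/-- entrywise `C¹` for matrix-valued maps -/
def CDM {n N : ℕ} {α β : Type*} (M : (RicIdx n N → ℝ) → Matrix α β ℝ) : Prop :=
  ∀ a b, ContDiff ℝ 1 fun e => M e a b

section CDMlemmas
variable {n N : ℕ}

lemma cdm_const {α β : Type*} (M : Matrix α β ℝ) : CDM (n := n) (N := N) (fun _ => M) :=
  fun _ _ => contDiff_const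

lemma cdm_proj (k : Fin N) : CDM (fun e : RicIdx n N → ℝ => ricDec e k) :=
  fun a b => contDiff_apply ℝ ℝ (k, a, b)

lemma CDM.mul {α β γ : Type*} [Fintype β] {M : (RicIdx n N → ℝ) → Matrix α β ℝ}
    {M' : (RicIdx n N → ℝ) → Matrix β γ ℝ} (h : CDM M) (h' : CDM M') :
    CDM (fun e => M e * M' e) := by
  intro a b
  simp only [Matrix.mul_apply]
  exact ContDiff.sum fun j _ => (h a j).mul (h' j b)

lemma CDM.add {α β : Type*} {M M' : (RicIdx n N → ℝ) → Matrix α β ℝ}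
    (h : CDM M) (h' : CDM M') : CDM (fun e => M e + M' e) := by
  intro a b; simpa [Matrix.add_apply] using (h a b).add (h' a b)

lemma CDM.sub {α β : Type*} {M M' : (RicIdx n N → ℝ) → Matrix α β ℝ}
    (h : CDM M) (h' : CDM M') : CDM (fun e => M e - M' e) := by
  intro a b; simpa [Matrix.sub_apply] using (h a b).sub (h' a b)

lemma CDM.neg {α β : Type*} {M : (RicIdx n N → ℝ) → Matrix α β ℝ}
    (h : CDM M) : CDM (fun e => -(M e)) := by
  intro a b; simpa [Matrix.neg_apply] using (h a b).neg

lemma cdm_sum {α β ι : Type*} {M : ι → (RicIdx n N → ℝ) → Matrix α β ℝ} (s : Finset ι)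
    (h : ∀ k, CDM (M k)) : CDM (fun e => ∑ k ∈ s, M k e) := by
  intro a b
  simp only [Matrix.sum_apply]
  exact ContDiff.sum fun j _ => h j a b

end CDMlemmas

noncomputable def ricV (n n1 N : ℕ) (A G Q Γ : Matrix (Fin n) (Fin n) ℝ)
    (B : Matrix (Fin n) (Fin n1) ℝ) (R : Matrix (Fin n1) (Fin n1) ℝ) :
    (RicIdx n N → ℝ) → (RicIdx n N → ℝ) :=
  fun e x => riccatiRHS n n1 N A G Q Γ B R (ricDec e) x.1 x.2.1 x.2.2

lemma cdm_rhs (n n1 N : ℕ) (A G Q Γ : Matrix (Fin n) (Fin n) ℝ)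
    (B : Matrix (Fin n) (Fin n1) ℝ) (R : Matrix (Fin n1) (Fin n1) ℝ) (i : Fin N) :
    CDM (fun e => riccatiRHS n n1 N A G Q Γ B R (ricDec e) i) := by
  unfold riccatiRHS
  refine CDM.sub (CDM.sub (CDM.add (CDM.add (CDM.neg (CDM.add ?_ ?_)) ?_) ?_) ?_)
    (cdm_const _)
  · exact (cdm_proj i).mul (cdm_const _)
  · exact (cdm_const _).mul (cdm_proj i)
  · exact (cdm_proj i).mul (cdm_sum _ fun k => (cdm_const _).mul (cdm_proj k))
  · exact (cdm_sum _ fun k => (((cdm_proj k).mul (cdm_const _)).mul (cdm_const _)).mul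
      (cdm_const _)).mul (cdm_proj i)
  · exact ((((cdm_proj i).mul (cdm_const _)).mul (cdm_const _)).mul (cdm_const _)).mul
      (cdm_proj i)

lemma contDiff_ricV (n n1 N : ℕ) (A G Q Γ : Matrix (Fin n) (Fin n) ℝ)
    (B : Matrix (Fin n) (Fin n1) ℝ) (R : Matrix (Fin n1) (Fin n1) ℝ) :
    ContDiff ℝ 1 (ricV n n1 N A G Q Γ B R) :=
  contDiff_pi.2 fun x => cdm_rhs n n1 N A G Q Γ B R x.1 x.2.1 x.2.2

lemma ricV_lipschitz (n n1 N : ℕ) (A G Q Γ : Matrix (Fin n) (Fin n) ℝ)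
    (B : Matrix (Fin n) (Fin n1) ℝ) (R : Matrix (Fin n1) (Fin n1) ℝ) (M : ℝ) :
    ∃ K : NNReal, LipschitzOnWith K (ricV n n1 N A G Q Γ B R) (Metric.closedBall 0 M) := by
  have hcd := contDiff_ricV n n1 N A G Q Γ B R
  have hdiff := hcd.differentiable one_ne_zero
  have hcont : Continuous (fderiv ℝ (ricV n n1 N A G Q Γ B R)) :=
    hcd.continuous_fderiv one_ne_zero
  obtain ⟨C, hC⟩ := (isCompact_closedBall (0 : RicIdx n N → ℝ) M).exists_bound_of_continuousOn
    hcont.continuousOn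
  refine ⟨C.toNNReal,
    (convex_closedBall (0 : RicIdx n N → ℝ) M).lipschitzOnWith_of_nnnorm_hasFDerivWithin_le
      (fun x _ => (hdiff x).hasFDerivAt.hasFDerivWithinAt) (fun x hx => ?_)⟩
  rw [← norm_toNNReal]
  exact Real.toNNReal_mono (hC x hx)

/-- Uniqueness of solutions of the Riccati terminal value problem. -/
lemma riccati_unique (n n1 N : ℕ) (A G Q Qf Γ Γf : Matrix (Fin n) (Fin n) ℝ)
    (B : Matrix (Fin n) (Fin n1) ℝ) (R : Matrix (Fin n1) (Fin n1) ℝ)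
    (τ T : ℝ)
    (P P' : Fin N → ℝ → Matrix (Fin N × Fin n) (Fin N × Fin n) ℝ)
    (hP : IsRiccatiSol n n1 N A G Q Qf Γ Γf B R τ T P)
    (hP' : IsRiccatiSol n n1 N A G Q Qf Γ Γf B R τ T P') :
    ∀ i, ∀ t ∈ Set.Icc τ T, P i t = P' i t := by
  set V := ricV n n1 N A G Q Γ B R with hV
  set f : ℝ → (RicIdx n N → ℝ) := fun t x => P x.1 t x.2.1 x.2.2 with hf
  set g : ℝ → (RicIdx n N → ℝ) := fun t x => P' x.1 t x.2.1 x.2.2 with hg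
  have hfc : ContinuousOn f (Set.Icc τ T) :=
    continuousOn_pi.2 fun x t ht => (hP.1 x.1 t ht x.2.1 x.2.2).continuousWithinAt
  have hgc : ContinuousOn g (Set.Icc τ T) :=
    continuousOn_pi.2 fun x t ht => (hP'.1 x.1 t ht x.2.1 x.2.2).continuousWithinAt
  obtain ⟨C1, hC1⟩ := isCompact_Icc.exists_bound_of_continuousOn hfc
  obtain ⟨C2, hC2⟩ := isCompact_Icc.exists_bound_of_continuousOn hgc
  set M := max C1 C2 with hM
  obtain ⟨K, hK⟩ := ricV_lipschitz n n1 N A G Q Γ B R M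
  have hderiv : ∀ (Pc : Fin N → ℝ → Matrix (Fin N × Fin n) (Fin N × Fin n) ℝ),
      IsRiccatiSol n n1 N A G Q Qf Γ Γf B R τ T Pc →
      ∀ t ∈ Set.Ioc τ T, HasDerivWithinAt (fun s x => Pc x.1 s x.2.1 x.2.2 : ℝ → RicIdx n N → ℝ)
        (V (fun x => Pc x.1 t x.2.1 x.2.2)) (Set.Iic t) t := by
    intro Pc hPc t ht
    refine hasDerivWithinAt_pi.2 fun x => ?_
    have h := hPc.1 x.1 t ⟨le_of_lt ht.1, ht.2⟩ x.2.1 x.2.2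
    have hmem : Set.Icc τ T ∈ nhdsWithin t (Set.Iic t) := by
      have h1 : Set.Ioi τ ∈ nhds t := Ioi_mem_nhds ht.1
      refine Filter.mem_of_superset
        (Filter.inter_mem (mem_nhdsWithin_of_mem_nhds h1) self_mem_nhdsWithin) ?_
      exact fun y hy => ⟨le_of_lt hy.1, hy.2.trans ht.2⟩
    exact h.mono_of_mem_nhdsWithin hmem
  have key : Set.EqOn f g (Set.Icc τ T) := by
    refine ODE_solution_unique_of_mem_Icc_left
      (v := fun _ => V) (s := fun _ => Metric.closedBall 0 M) (K := K) (fun _ _ => hK)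
      hfc (fun t ht => hderiv P hP t ht) (fun t ht => ?_)
      hgc (fun t ht => hderiv P' hP' t ht) (fun t ht => ?_) ?_
    · exact mem_closedBall_zero_iff.2
        ((hC1 t (Set.Ioc_subset_Icc_self ht)).trans (le_max_left C1 C2))
    · exact mem_closedBall_zero_iff.2
        ((hC2 t (Set.Ioc_subset_Icc_self ht)).trans (le_max_right C1 C2))
    · funext x
      show P x.1 T x.2.1 x.2.2 = P' x.1 T x.2.1 x.2.2
      rw [hP.2, hP'.2]
  intro i t ht
  ext p q
  exact congrFun (key ht) (i, p, q)

theorem riccati_solution_unique_and_symmetric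
    (n n1 N : ℕ) (hn : 0 < n) (hn1 : 0 < n1) (hN : 0 < N)
    (T : ℝ) (hT : 0 < T)
    (A G Q Qf Γ Γf : Matrix (Fin n) (Fin n) ℝ)
    (B : Matrix (Fin n) (Fin n1) ℝ) (R : Matrix (Fin n1) (Fin n1) ℝ)
    (hQ : Q.PosSemidef) (hQf : Qf.PosSemidef) (hR : R.PosDef)
    (τ : ℝ) (hτ0 : 0 ≤ τ) (hτT : τ ≤ T)
    (P P' : Fin N → ℝ → Matrix (Fin N × Fin n) (Fin N × Fin n) ℝ)
    (hP : IsRiccatiSol n n1 N A G Q Qf Γ Γf B R τ T P)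
    (hP' : IsRiccatiSol n n1 N A G Q Qf Γ Γf B R τ T P') :
    (∀ i, ∀ t ∈ Set.Icc τ T, P i t = P' i t) ∧
    (∀ i, ∀ t ∈ Set.Icc τ T, (P i t)ᵀ = P i t) := by
  have hQt : Qᵀ = Q := by
    have := hQ.1
    simpa [Matrix.IsHermitian] using this
  have hQft : Qfᵀ = Qf := by
    have := hQf.1
    simpa [Matrix.IsHermitian] using this
  have hRt : Rᵀ = R := by
    have := hR.1
    simpa [Matrix.IsHermitian] using this
  refine ⟨riccati_unique n n1 N A G Q Qf Γ Γf B R τ T P P' hP hP', ?_⟩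
  have hPT : IsRiccatiSol n n1 N A G Q Qf Γ Γf B R τ T (fun i t => (P i t)ᵀ) := by
    constructor
    · intro i t ht p q
      have h := hP.1 i t ht q p
      have hr := rhs_transpose n n1 N A G Q Γ B R hQt hRt (fun k => P k t) i
      rw [show riccatiRHS n n1 N A G Q Γ B R (fun k => (P k t)ᵀ) i p q
          = riccatiRHS n n1 N A G Q Γ B R (fun k => P k t) i q p by
        rw [hr]; rfl]
      exact h
    · intro i
      have : (Qblk n N Qf Γf i)ᵀ = Qblk n N Qf Γf i := by
        simp [Qblk, Matrix.transpose_mul, Matrix.transpose_transpose, hQft, Matrix.mul_assoc]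
      show (P i T)ᵀ = Qblk n N Qf Γf i
      rw [hP.2 i]
      exact this
  intro i t ht
  exact (riccati_unique n n1 N A G Q Qf Γ Γf B R τ T P (fun i t => (P i t)ᵀ) hP hPT i t ht).symm
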